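/- arXiv:1206.2039 — 7 statements merged into one kernel-verified Lean document; each statement's English description precedes it below -/
import Mathlib

section
/- Let ν be a finite positive Borel measure on [0,∞) and define φ : ℝ → ℂ by φ(x) = ∫₀^∞ e^{−λ|x|} dν(λ). Then φ is continuous and reflection positive for the triple (ℝ, −id, ℝ₊); that is: (a) the kernel (x,y) ↦ φ(x−y) on ℝ is positive definite; (b) φ(−x) = φ(x) for all x ∈ ℝ; (c) the kernel (x,y) ↦ φ(x+y) on the open half-line (0,∞) is positive definite. -/
open MeasureTheory
open scoped ComplexOrder

/-- A kernel `K : X × X → ℂ` is positive definite on a set `A ⊆ X` if for all points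
`x₁,…,x_m ∈ A` and coefficients `c₁,…,c_m ∈ ℂ` the sum `∑ c_j conj(c_k) K(x_j, x_k)`
is a nonnegative real number (expressed via the order on `ℂ`). -/
def PosDefKernelOn {X : Type*} (A : Set X) (K : X → X → ℂ) : Prop :=
  ∀ (m : ℕ) (x : Fin m → X), (∀ i, x i ∈ A) → ∀ c : Fin m → ℂ,
    0 ≤ ∑ j : Fin m, ∑ k : Fin m, c j * (starRingEnd ℂ) (c k) * K (x j) (x k)

section Aux
open Real

-- rank one positivity
lemma sum_eq_normSq (m : ℕ) (c : Fin m → ℂ) (g : Fin m → ℝ) :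
    ∑ j : Fin m, ∑ k : Fin m, c j * (starRingEnd ℂ) (c k) * ((g j * g k : ℝ) : ℂ)
      = ((Complex.normSq (∑ j : Fin m, c j * (g j : ℂ)) : ℝ) : ℂ) := by
  rw [← Complex.mul_conj, map_sum, Finset.sum_mul_sum]
  refine Finset.sum_congr rfl fun j _ => Finset.sum_congr rfl fun k _ => ?_
  rw [map_mul, Complex.conj_ofReal]
  push_cast
  ring

lemma rankOne (m : ℕ) (c : Fin m → ℂ) (g : Fin m → ℝ) :
    0 ≤ ∑ j : Fin m, ∑ k : Fin m, c j * (starRingEnd ℂ) (c k) * ((g j * g k : ℝ) : ℂ) := by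
  rw [sum_eq_normSq]
  exact Complex.zero_le_real.2 (Complex.normSq_nonneg _)

lemma integral_complex_nonneg {α : Type*} [MeasurableSpace α] {μ : Measure α} {f : α → ℂ}
    (hf : ∀ᵐ a ∂μ, 0 ≤ f a) : 0 ≤ ∫ a, f a ∂μ := by
  have h1 : f =ᵐ[μ] fun a => (((f a).re : ℝ) : ℂ) := by
    filter_upwards [hf] with a ha
    have him : (f a).im = 0 := by
      have := ha; rw [Complex.le_def] at this; simpa using this.2.symm
    exact (Complex.ext rfl (by simp [him]))
  rw [integral_congr_ae h1]
  have h2 : ∫ a, (((f a).re : ℝ) : ℂ) ∂μ = ((∫ a, (f a).re ∂μ : ℝ) : ℂ) := integral_ofReal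
  rw [h2]
  refine Complex.zero_le_real.2 (integral_nonneg_of_ae ?_)
  filter_upwards [hf] with a ha
  rw [Complex.le_def] at ha; simpa using ha.1

noncomputable def hfun (u t : ℝ) : ℝ := Set.indicator (Set.Iic u) (fun s => Real.exp (s - u)) t

lemma hfun_mul (u v t : ℝ) : hfun u t * hfun v t
    = Set.indicator (Set.Iic (min u v)) (fun s => Real.exp (2*s) * Real.exp (-(u+v))) t := by
  unfold hfun
  simp only [Set.indicator_apply, Set.mem_Iic, le_min_iff]
  split_ifs with h1 h2 h3 <;>
    first
      | (rw [← Real.exp_add, ← Real.exp_add]; congr 1; ring)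
      | tauto
      | simp_all

lemma intOn_exp2 (m : ℝ) : IntegrableOn (fun t => Real.exp (2*t)) (Set.Iic m) := by
  apply Integrable.mono' ((integrableOn_exp_Iic m).const_mul (Real.exp m))
  · exact (Real.continuous_exp.comp (continuous_const.mul continuous_id)).aestronglyMeasurable
  · filter_upwards [ae_restrict_mem measurableSet_Iic] with t ht
    rw [Real.norm_eq_abs, abs_of_pos (Real.exp_pos _), show (2:ℝ)*t = t + t by ring, Real.exp_add]
    exact mul_le_mul_of_nonneg_right (Real.exp_le_exp.2 ht) (Real.exp_pos _).le

lemma int_exp2 (m : ℝ) : ∫ t in Set.Iic m, Real.exp (2*t) = Real.exp (2*m) / 2 := by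
  have hder : ∀ t ∈ Set.Iic m, HasDerivAt (fun s => Real.exp (2*s) / 2) (Real.exp (2*t)) t := by
    intro t _
    have h1 : HasDerivAt (fun s : ℝ => 2*s) 2 t := by
      simpa using (hasDerivAt_id t).const_mul (2:ℝ)
    have := ((Real.hasDerivAt_exp (2*t)).comp t h1).div_const 2
    rw [show Real.exp (2*t) = Real.exp (2*t) * 2 / 2 by ring]
    exact this
  have htend : Filter.Tendsto (fun s => Real.exp (2*s) / 2) Filter.atBot (nhds 0) := by
    have h2 : Filter.Tendsto (fun s : ℝ => 2*s) Filter.atBot Filter.atBot := by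
      exact Filter.tendsto_id.const_mul_atBot two_pos
    simpa using (Real.tendsto_exp_atBot.comp h2).div_const 2
  have := integral_Iic_of_hasDerivAt_of_tendsto' hder (intOn_exp2 m) htend
  rw [this]; ring

lemma hmul_eq (u v : ℝ) : (fun t => hfun u t * hfun v t)
    = Set.indicator (Set.Iic (min u v)) (fun s => Real.exp (2*s) * Real.exp (-(u+v))) :=
  funext (hfun_mul u v)

lemma hmul_int (u v : ℝ) : Integrable (fun t => hfun u t * hfun v t) := by
  rw [hmul_eq]
  exact (integrable_indicator_iff measurableSet_Iic).2 ((intOn_exp2 _).mul_const _)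

lemma hmul_integral (u v : ℝ) : ∫ t, hfun u t * hfun v t = Real.exp (-|u - v|) / 2 := by
  rw [hmul_eq, integral_indicator measurableSet_Iic, integral_mul_const, int_exp2]
  have h : 2 * min u v + -(u+v) = -|u - v| := by
    rcases le_total u v with h|h
    · rw [min_eq_left h, abs_of_nonpos (by linarith)]; ring
    · rw [min_eq_right h, abs_of_nonneg (by linarith)]; ring
  rw [div_mul_eq_mul_div, ← Real.exp_add, h]

lemma keylem (l : ℝ) (hl : 0 ≤ l) (m : ℕ) (x : Fin m → ℝ) (c : Fin m → ℂ) :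
    0 ≤ ∑ j : Fin m, ∑ k : Fin m,
      c j * (starRingEnd ℂ) (c k) * Complex.exp ((-(l * |x j - x k|) : ℝ) : ℂ) := by
  rcases hl.eq_or_lt with rfl|hl
  · simp only [zero_mul, neg_zero, Complex.ofReal_zero, Complex.exp_zero]
    have := rankOne m c (fun _ => 1)
    simpa using this
  · set u : Fin m → ℝ := fun j => l * x j with hu
    set F : Fin m → Fin m → ℝ → ℂ :=
      fun j k t => (2 * (c j * (starRingEnd ℂ) (c k))) * ((hfun (u j) t * hfun (u k) t : ℝ) : ℂ)
      with hF
    have hintc : ∀ j k : Fin m, Integrable (F j k) := by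
      intro j k
      exact ((hmul_int (u j) (u k)).ofReal (𝕜 := ℂ)).const_mul _
    have hterm : ∀ j k : Fin m,
        c j * (starRingEnd ℂ) (c k) * Complex.exp ((-(l * |x j - x k|) : ℝ) : ℂ)
          = ∫ t : ℝ, F j k t := by
      intro j k
      simp only [hF]
      rw [integral_const_mul]
      have h1 : ∫ t : ℝ, ((hfun (u j) t * hfun (u k) t : ℝ) : ℂ)
          = ((Real.exp (-|u j - u k|) / 2 : ℝ) : ℂ) := by
        calc ∫ t : ℝ, ((hfun (u j) t * hfun (u k) t : ℝ) : ℂ)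
            = ((∫ t : ℝ, hfun (u j) t * hfun (u k) t : ℝ) : ℂ) := integral_ofReal
          _ = _ := by rw [hmul_integral]
      rw [h1]
      have habs : l * |x j - x k| = |u j - u k| := by
        simp only [hu, ← mul_sub, abs_mul, abs_of_pos hl]
      rw [habs, ← Complex.ofReal_exp]
      push_cast
      ring
    have hsum : ∑ j : Fin m, ∑ k : Fin m,
        c j * (starRingEnd ℂ) (c k) * Complex.exp ((-(l * |x j - x k|) : ℝ) : ℂ)
          = ∫ t : ℝ, ∑ j : Fin m, ∑ k : Fin m, F j k t := by
      calc ∑ j : Fin m, ∑ k : Fin m,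
          c j * (starRingEnd ℂ) (c k) * Complex.exp ((-(l * |x j - x k|) : ℝ) : ℂ)
          = ∑ j : Fin m, ∑ k : Fin m, ∫ t : ℝ, F j k t :=
            Finset.sum_congr rfl fun j _ => Finset.sum_congr rfl fun k _ => hterm j k
        _ = ∑ j : Fin m, ∫ t : ℝ, ∑ k : Fin m, F j k t :=
            Finset.sum_congr rfl fun j _ => (integral_finset_sum _ (fun k _ => hintc j k)).symm
        _ = ∫ t : ℝ, ∑ j : Fin m, ∑ k : Fin m, F j k t :=
            (integral_finset_sum _ (fun j _ =>
              integrable_finset_sum _ fun k _ => hintc j k)).symm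
    have hpt : ∀ t : ℝ, ∑ j : Fin m, ∑ k : Fin m, F j k t
        = (((2:ℝ) * Complex.normSq (∑ j : Fin m, c j * ((hfun (u j) t : ℝ) : ℂ)) : ℝ) : ℂ) := by
      intro t
      have h2 := sum_eq_normSq m c (fun j => hfun (u j) t)
      calc ∑ j : Fin m, ∑ k : Fin m, F j k t
          = 2 * ∑ j : Fin m, ∑ k : Fin m,
              c j * (starRingEnd ℂ) (c k) * ((hfun (u j) t * hfun (u k) t : ℝ) : ℂ) := by
            rw [Finset.mul_sum]
            exact Finset.sum_congr rfl fun j _ => by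
              rw [Finset.mul_sum]
              exact Finset.sum_congr rfl fun k _ => by simp only [hF]; ring
        _ = 2 * ((Complex.normSq (∑ j : Fin m, c j * ((hfun (u j) t : ℝ) : ℂ)) : ℝ) : ℂ) := by
            rw [h2]
        _ = _ := by push_cast; ring
    rw [hsum]
    apply integral_complex_nonneg
    refine Filter.Eventually.of_forall fun t => ?_
    rw [hpt t]
    exact Complex.zero_le_real.2 (mul_nonneg two_pos.le (Complex.normSq_nonneg _))

lemma expInt (ν : Measure ℝ) [IsFiniteMeasure ν] (a : ℝ) (ha : 0 ≤ a) :
    Integrable (fun l : ℝ => Complex.exp ((-(l * a) : ℝ) : ℂ)) (ν.restrict (Set.Ici 0)) := by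
  apply Integrable.mono' (integrable_const (1:ℝ))
  · exact (Complex.continuous_exp.comp (Complex.continuous_ofReal.comp
      ((continuous_id.mul continuous_const).neg))).aestronglyMeasurable
  · filter_upwards [ae_restrict_mem measurableSet_Ici] with l hl
    rw [Complex.norm_exp]
    simp only [Complex.ofReal_re]
    exact Real.exp_le_one_iff.2 (neg_nonpos.2 (mul_nonneg hl ha))

lemma swap_lemma {μ : Measure ℝ} (m : ℕ) (c : Fin m → ℂ) (G : Fin m → Fin m → ℝ → ℂ)
    (hint : ∀ j k, Integrable (fun l => G j k l) μ) :
    ∑ j : Fin m, ∑ k : Fin m, c j * (starRingEnd ℂ) (c k) * ∫ l, G j k l ∂μ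
      = ∫ l, ∑ j : Fin m, ∑ k : Fin m, c j * (starRingEnd ℂ) (c k) * G j k l ∂μ := by
  have hint' : ∀ j k : Fin m,
      Integrable (fun l => c j * (starRingEnd ℂ) (c k) * G j k l) μ :=
    fun j k => (hint j k).const_mul _
  calc ∑ j : Fin m, ∑ k : Fin m, c j * (starRingEnd ℂ) (c k) * ∫ l, G j k l ∂μ
      = ∑ j : Fin m, ∑ k : Fin m, ∫ l, c j * (starRingEnd ℂ) (c k) * G j k l ∂μ :=
        Finset.sum_congr rfl fun j _ => Finset.sum_congr rfl fun k _ =>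
          (integral_const_mul _ _).symm
    _ = ∑ j : Fin m, ∫ l, ∑ k : Fin m, c j * (starRingEnd ℂ) (c k) * G j k l ∂μ :=
        Finset.sum_congr rfl fun j _ => (integral_finset_sum _ (fun k _ => hint' j k)).symm
    _ = _ := (integral_finset_sum _ (fun j _ =>
          integrable_finset_sum _ fun k _ => hint' j k)).symm

theorem stmt_0' (ν : Measure ℝ) [IsFiniteMeasure ν] (hsupp : ν (Set.Iio (0 : ℝ)) = 0)
    (φ : ℝ → ℂ)
    (hφ : ∀ x : ℝ, φ x = ∫ l in Set.Ici (0 : ℝ), Complex.exp ((-(l * |x|) : ℝ) : ℂ) ∂ν) :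
    Continuous φ ∧
    (∀ (m : ℕ) (x : Fin m → ℝ), (∀ i, x i ∈ (Set.univ : Set ℝ)) → ∀ c : Fin m → ℂ,
      0 ≤ ∑ j : Fin m, ∑ k : Fin m, c j * (starRingEnd ℂ) (c k) * φ (x j - x k)) ∧
    (∀ x : ℝ, φ (-x) = φ x) ∧
    (∀ (m : ℕ) (x : Fin m → ℝ), (∀ i, x i ∈ Set.Ioi (0:ℝ)) → ∀ c : Fin m → ℂ,
      0 ≤ ∑ j : Fin m, ∑ k : Fin m, c j * (starRingEnd ℂ) (c k) * φ (x j + x k)) := by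
  refine ⟨?_, ?_, ?_, ?_⟩
  · have h1 : Continuous fun x : ℝ =>
        ∫ l in Set.Ici (0:ℝ), Complex.exp ((-(l * |x|) : ℝ) : ℂ) ∂ν := by
      apply continuous_of_dominated (bound := fun _ => (1:ℝ))
      · intro x
        exact (Complex.continuous_exp.comp (Complex.continuous_ofReal.comp
          ((continuous_id.mul continuous_const).neg))).aestronglyMeasurable
      · intro x
        filter_upwards [ae_restrict_mem measurableSet_Ici] with l hl
        rw [Complex.norm_exp]
        simp only [Complex.ofReal_re]
        exact Real.exp_le_one_iff.2 (neg_nonpos.2 (mul_nonneg hl (abs_nonneg _)))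
      · exact integrable_const 1
      · exact Filter.Eventually.of_forall fun l =>
          Complex.continuous_exp.comp (Complex.continuous_ofReal.comp
            ((continuous_const.mul continuous_abs).neg))
    have h2 : φ = fun x : ℝ =>
        ∫ l in Set.Ici (0:ℝ), Complex.exp ((-(l * |x|) : ℝ) : ℂ) ∂ν := funext hφ
    rw [h2]; exact h1
  · intro m x _ c
    have h3 : ∑ j : Fin m, ∑ k : Fin m, c j * (starRingEnd ℂ) (c k) * φ (x j - x k)
        = ∫ l in Set.Ici (0:ℝ), ∑ j : Fin m, ∑ k : Fin m,
            c j * (starRingEnd ℂ) (c k) * Complex.exp ((-(l * |x j - x k|) : ℝ) : ℂ) ∂ν := by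
      rw [← swap_lemma m c _ (fun j k => expInt ν _ (abs_nonneg (x j - x k)))]
      exact Finset.sum_congr rfl fun j _ => Finset.sum_congr rfl fun k _ => by rw [hφ]
    rw [h3]
    apply integral_complex_nonneg
    filter_upwards [ae_restrict_mem measurableSet_Ici] with l hl
    exact keylem l hl m x c
  · intro x; rw [hφ, hφ, abs_neg]
  · intro m x hx c
    have h3 : ∑ j : Fin m, ∑ k : Fin m, c j * (starRingEnd ℂ) (c k) * φ (x j + x k)
        = ∫ l in Set.Ici (0:ℝ), ∑ j : Fin m, ∑ k : Fin m,
            c j * (starRingEnd ℂ) (c k) * Complex.exp ((-(l * |x j + x k|) : ℝ) : ℂ) ∂ν := by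
      rw [← swap_lemma m c _ (fun j k => expInt ν _ (abs_nonneg (x j + x k)))]
      exact Finset.sum_congr rfl fun j _ => Finset.sum_congr rfl fun k _ => by rw [hφ]
    rw [h3]
    apply integral_complex_nonneg
    filter_upwards [ae_restrict_mem measurableSet_Ici] with l hl
    have h4 : ∑ j : Fin m, ∑ k : Fin m,
        c j * (starRingEnd ℂ) (c k) * Complex.exp ((-(l * |x j + x k|) : ℝ) : ℂ)
        = ∑ j : Fin m, ∑ k : Fin m, c j * (starRingEnd ℂ) (c k) *
            ((Real.exp (-(l * x j)) * Real.exp (-(l * x k)) : ℝ) : ℂ) := by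
      refine Finset.sum_congr rfl fun j _ => Finset.sum_congr rfl fun k _ => ?_
      congr 1
      rw [abs_of_pos (add_pos (hx j) (hx k)), ← Real.exp_add, ← Complex.ofReal_exp]
      congr 2
      ring
    rw [h4]
    exact rankOne m c _

end Aux

/-- If `ν` is a finite positive Borel measure on `[0,∞)` and
`φ(x) = ∫₀^∞ e^{-λ|x|} dν(λ)`, then `φ` is continuous and reflection positive for
`(ℝ, -id, ℝ₊)`: the kernel `φ(x-y)` is positive definite on `ℝ`, `φ(-x) = φ(x)`,
and the kernel `φ(x+y)` is positive definite on `(0,∞)`. -/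
theorem stmt_0 (ν : Measure ℝ) [IsFiniteMeasure ν] (hsupp : ν (Set.Iio (0 : ℝ)) = 0)
    (φ : ℝ → ℂ)
    (hφ : ∀ x : ℝ, φ x = ∫ l in Set.Ici (0 : ℝ), Complex.exp ((-(l * |x|) : ℝ) : ℂ) ∂ν) :
    Continuous φ ∧
    PosDefKernelOn (Set.univ : Set ℝ) (fun x y => φ (x - y)) ∧
    (∀ x : ℝ, φ (-x) = φ x) ∧
    PosDefKernelOn (Set.Ioi (0 : ℝ)) (fun x y => φ (x + y)) := by
  obtain ⟨h1, h2, h3, h4⟩ := stmt_0' ν hsupp φ hφ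
  exact ⟨h1, h2, h3, h4⟩
end

section
/- For every λ > 0 and every x ∈ ℝ one has e^{−λ|x|} = (1/π) ∫_ℝ e^{i x y} · λ/(λ² + y²) dy; equivalently, the Fourier transform of the Cauchy distribution dμ_λ(y) = (1/π) · λ/(λ² + y²) dy is the function x ↦ e^{−λ|x|}. -/
open MeasureTheory

open MeasureTheory Real Filter Set
open scoped FourierTransform Topology

lemma integrableOn_cexp_Ioi {c : ℂ} (hc : c.re < 0) :
    IntegrableOn (fun t : ℝ => Complex.exp (c * t)) (Set.Ioi (0:ℝ)) := by
  refine Integrable.mono' (g := fun t : ℝ => Real.exp (-(-c.re) * t))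
    (exp_neg_integrableOn_Ioi 0 (by linarith)) ?_ ?_
  · exact (Complex.continuous_exp.comp (continuous_const.mul Complex.continuous_ofReal)).aestronglyMeasurable
  · filter_upwards with t
    simp [Complex.norm_exp, Complex.mul_re]

lemma integral_cexp_Ioi {c : ℂ} (hc : c.re < 0) :
    ∫ t : ℝ in Set.Ioi (0:ℝ), Complex.exp (c * t) = -c⁻¹ := by
  have hc0 : c ≠ 0 := fun h => by simp [h] at hc
  have h1 := intervalIntegral_tendsto_integral_Ioi 0 (integrableOn_cexp_Ioi hc) tendsto_id
  have h2 : Tendsto (fun b : ℝ => ∫ t in (0:ℝ)..b, Complex.exp (c * t)) atTop (𝓝 (-c⁻¹)) := by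
    have heq : ∀ b : ℝ, (∫ t in (0:ℝ)..b, Complex.exp (c * t))
        = (Complex.exp (c * b) - 1) / c := by
      intro b; rw [integral_exp_mul_complex hc0]; simp
    simp_rw [heq]
    have hexp : Tendsto (fun b : ℝ => Complex.exp (c * b)) atTop (𝓝 0) := by
      rw [tendsto_zero_iff_norm_tendsto_zero]
      have : (fun b : ℝ => ‖Complex.exp (c * b)‖) = fun b : ℝ => Real.exp (c.re * b) := by
        ext b; simp [Complex.norm_exp, Complex.mul_re]
      rw [this]
      exact Real.tendsto_exp_atBot.comp ((tendsto_const_mul_atBot_of_neg hc).mpr tendsto_id)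
    have := (hexp.sub (tendsto_const_nhds (x := (1:ℂ)))).div_const c
    simpa [neg_div, one_div] using this
  exact tendsto_nhds_unique h1 h2

lemma integrableOn_cexp_Iic {c : ℂ} (hc : 0 < c.re) :
    IntegrableOn (fun t : ℝ => Complex.exp (c * t)) (Set.Iic (0:ℝ)) := by
  have h_map_neg : (volume.restrict (Set.Ici (0:ℝ))).map Neg.neg
      = volume.restrict (Set.Iic (0:ℝ)) := by
    conv => rhs; rw [← Measure.map_neg_eq_self (volume : Measure ℝ),
      measurableEmbedding_neg.restrict_map]
    simp
  rw [IntegrableOn, ← h_map_neg, measurableEmbedding_neg.integrable_map_iff]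
  have heq : ((fun t : ℝ => Complex.exp (c * t)) ∘ Neg.neg)
      = fun t : ℝ => Complex.exp (-c * t) := by
    ext t; simp
  rw [heq, ← IntegrableOn, integrableOn_Ici_iff_integrableOn_Ioi]
  exact integrableOn_cexp_Ioi (by simpa using hc)

lemma integral_cexp_Iic {c : ℂ} (hc : 0 < c.re) :
    ∫ t : ℝ in Set.Iic (0:ℝ), Complex.exp (c * t) = c⁻¹ := by
  have h := integral_comp_neg_Iic (0:ℝ) (fun t : ℝ => Complex.exp (-c * t))
  simp only [Complex.ofReal_neg, mul_neg, neg_mul, neg_neg, neg_zero] at h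
  rw [h]
  have : ∀ x : ℝ, Complex.exp (-(c * x)) = Complex.exp (-c * x) := by intro x; ring_nf
  simp_rw [this]
  rw [integral_cexp_Ioi (by simpa using hc), inv_neg, neg_neg]

lemma integrable_exp_neg_mul_abs_complex {l : ℝ} (hl : 0 < l) :
    Integrable (fun t : ℝ => ((Real.exp (-(l * |t|)) : ℝ) : ℂ)) := by
  rw [← integrableOn_univ, ← Set.Iic_union_Ioi (a := (0:ℝ)), integrableOn_union]
  constructor
  · refine (integrableOn_cexp_Iic (c := (l:ℂ)) (by simpa using hl)).congr_fun ?_ measurableSet_Iic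
    intro t ht
    simp only [Set.mem_Iic] at ht
    simp only [abs_of_nonpos ht]
    rw [Complex.ofReal_exp]
    push_cast
    ring_nf
  · refine (integrableOn_cexp_Ioi (c := -(l:ℂ)) (by simpa using hl)).congr_fun ?_ measurableSet_Ioi
    intro t ht
    simp only [Set.mem_Ioi] at ht
    simp only [abs_of_pos ht]
    rw [Complex.ofReal_exp]
    push_cast
    ring_nf

lemma fourier_exp_neg_mul_abs {l : ℝ} (hl : 0 < l) (ξ : ℝ) :
    (𝓕 (fun t : ℝ => ((Real.exp (-(l * |t|)) : ℝ) : ℂ))) ξ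
      = 2 * l / ((l:ℂ) ^ 2 + ((2 * π * ξ : ℝ) : ℂ) ^ 2) := by
  have hπ := Real.pi_pos
  set a : ℝ := 2 * π * ξ with ha
  have hcm : ((l:ℂ) - a * Complex.I).re = l := by simp
  have hcp : (-(l:ℂ) - a * Complex.I).re = -l := by simp
  have h1 : (l:ℂ) - a * Complex.I ≠ 0 := by
    intro h; rw [h] at hcm; simp at hcm; linarith
  have h2 : -(l:ℂ) - a * Complex.I ≠ 0 := by
    intro h; rw [h] at hcp; simp at hcp; linarith
  rw [Real.fourier_eq']
  simp only [smul_eq_mul, RCLike.inner_apply, conj_trivial, mul_comm ξ]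
  have eqIic : Set.EqOn (fun v : ℝ => Complex.exp (↑(-2 * π * (v * ξ)) * Complex.I) * ↑(rexp (-(l * |v|))))
      (fun v : ℝ => Complex.exp (((l:ℂ) - a * Complex.I) * v)) (Set.Iic (0:ℝ)) := by
    intro v hv
    simp only [Set.mem_Iic] at hv
    simp only [abs_of_nonpos hv]
    rw [Complex.ofReal_exp, ← Complex.exp_add]
    congr 1
    rw [ha]
    push_cast
    ring
  have eqIoi : Set.EqOn (fun v : ℝ => Complex.exp (↑(-2 * π * (v * ξ)) * Complex.I) * ↑(rexp (-(l * |v|))))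
      (fun v : ℝ => Complex.exp ((-(l:ℂ) - a * Complex.I) * v)) (Set.Ioi (0:ℝ)) := by
    intro v hv
    simp only [Set.mem_Ioi] at hv
    simp only [abs_of_pos hv]
    rw [Complex.ofReal_exp, ← Complex.exp_add]
    congr 1
    rw [ha]
    push_cast
    ring
  have hIic : IntegrableOn (fun v : ℝ => Complex.exp (↑(-2 * π * (v * ξ)) * Complex.I) * ↑(rexp (-(l * |v|)))) (Set.Iic (0:ℝ)) :=
    (integrableOn_cexp_Iic (c := (l:ℂ) - a * Complex.I) (by simpa [hcm] using hl)).congr_fun eqIic.symm measurableSet_Iic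
  have hIoi : IntegrableOn (fun v : ℝ => Complex.exp (↑(-2 * π * (v * ξ)) * Complex.I) * ↑(rexp (-(l * |v|)))) (Set.Ioi (0:ℝ)) :=
    (integrableOn_cexp_Ioi (c := -(l:ℂ) - a * Complex.I) (by simp [hcp]; exact hl)).congr_fun eqIoi.symm measurableSet_Ioi
  rw [← intervalIntegral.integral_Iic_add_Ioi hIic hIoi,
    setIntegral_congr_fun measurableSet_Iic eqIic,
    setIntegral_congr_fun measurableSet_Ioi eqIoi,
    integral_cexp_Iic (by simpa [hcm] using hl),
    integral_cexp_Ioi (by simp [hcp]; exact hl)]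
  have hd : (l:ℂ) ^ 2 + (a:ℂ) ^ 2 = ((l:ℂ) - a * Complex.I) * ((l:ℂ) + a * Complex.I) := by
    ring_nf
    rw [Complex.I_sq]
    ring
  rw [hd]
  have h2' : (l:ℂ) + a * Complex.I ≠ 0 := by
    intro h
    apply h2
    rw [show -(l:ℂ) - a * Complex.I = -((l:ℂ) + a * Complex.I) by ring, h, neg_zero]
  field_simp
  ring

lemma integrable_cauchy_density {l : ℝ} (hl : 0 < l) :
    Integrable (fun y : ℝ => 2 * l / (l ^ 2 + y ^ 2)) := by
  have h0 : Integrable (fun y : ℝ => (1 + (l⁻¹ * y) ^ 2)⁻¹) :=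
    integrable_inv_one_add_sq.comp_mul_left' (inv_ne_zero hl.ne')
  have h1 := (h0.const_mul (2 / l))
  refine h1.congr ?_
  filter_upwards with y
  have hll : l ^ 2 ≠ 0 := pow_ne_zero 2 hl.ne'
  field_simp

theorem stmt_2_aux (l : ℝ) (hl : 0 < l) (x : ℝ) :
    ((Real.exp (-(l * |x|)) : ℝ) : ℂ) =
      (1 / (Real.pi : ℂ)) *
        ∫ y : ℝ, Complex.exp (Complex.I * (x : ℂ) * (y : ℂ)) *
          ((l : ℂ) / ((l : ℂ) ^ 2 + (y : ℂ) ^ 2)) := by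
  have hπ := Real.pi_pos
  set f : ℝ → ℂ := fun t => ((Real.exp (-(l * |t|)) : ℝ) : ℂ) with hfdef
  have hFf : 𝓕 f = fun ξ : ℝ => 2 * l / ((l:ℂ) ^ 2 + ((2 * π * ξ : ℝ) : ℂ) ^ 2) :=
    funext (fourier_exp_neg_mul_abs hl)
  have hint : Integrable f := integrable_exp_neg_mul_abs_complex hl
  have hint2 : Integrable (𝓕 f) := by
    rw [hFf]
    have heq : (fun ξ : ℝ => 2 * (l:ℂ) / ((l:ℂ) ^ 2 + ((2 * π * ξ : ℝ) : ℂ) ^ 2))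
        = fun ξ : ℝ => ((2 * l / (l ^ 2 + (2 * π * ξ) ^ 2) : ℝ) : ℂ) := by
      ext ξ; push_cast; ring
    rw [heq]
    exact (((integrable_cauchy_density hl).comp_mul_left'
      (by positivity : (2 * π : ℝ) ≠ 0))).ofReal
  have hcont : Continuous f := by
    exact Complex.continuous_ofReal.comp
      (Real.continuous_exp.comp (continuous_const.mul continuous_abs).neg)
  have hinv := hint.fourierInv_fourier_eq hint2 (hcont.continuousAt (x := x))
  rw [Real.fourierInv_eq'] at hinv
  simp only [smul_eq_mul, RCLike.inner_apply, conj_trivial, hFf, mul_comm x] at hinv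
  set h : ℝ → ℂ := fun y => Complex.exp (Complex.I * (x : ℂ) * (y : ℂ)) *
    ((l : ℂ) / ((l : ℂ) ^ 2 + (y : ℂ) ^ 2)) with hhdef
  have hstep : ∀ ξ : ℝ, Complex.exp (↑(2 * π * (ξ * x)) * Complex.I)
      * (2 * l / ((l:ℂ) ^ 2 + ((2 * π * ξ : ℝ) : ℂ) ^ 2)) = 2 * h (2 * π * ξ) := by
    intro ξ
    rw [hhdef]
    have : (↑(2 * π * (ξ * x)) * Complex.I) = Complex.I * (x:ℂ) * ((2 * π * ξ : ℝ) : ℂ) := by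
      push_cast; ring
    rw [this]
    ring
  rw [show (fun ξ : ℝ => Complex.exp (↑(2 * π * (ξ * x)) * Complex.I)
      * (2 * l / ((l:ℂ) ^ 2 + ((2 * π * ξ : ℝ) : ℂ) ^ 2)))
      = fun ξ : ℝ => 2 * h (2 * π * ξ) from funext hstep] at hinv
  rw [integral_const_mul] at hinv
  have hcomp : (∫ ξ : ℝ, h (2 * π * ξ)) = |(2 * π)⁻¹| • ∫ y : ℝ, h y :=
    MeasureTheory.Measure.integral_comp_mul_left h (2 * π)
  rw [hcomp] at hinv
  rw [show ((Real.exp (-(l * |x|)) : ℝ) : ℂ) = f x from rfl, ← hinv]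
  rw [abs_of_pos (by positivity), Complex.real_smul]
  push_cast
  have : ((2 * π : ℝ) : ℂ) ≠ 0 := by
    simp only [ne_eq, Complex.ofReal_eq_zero]
    positivity
  field_simp


/-- For every `λ > 0` and `x ∈ ℝ`,
`e^{-λ|x|} = (1/π) ∫_ℝ e^{ixy} · λ/(λ² + y²) dy`, i.e. the Fourier transform of the
Cauchy distribution `dμ_λ(y) = (1/π) λ/(λ²+y²) dy` is `x ↦ e^{-λ|x|}`. -/
theorem stmt_2 (l : ℝ) (hl : 0 < l) (x : ℝ) :
    ((Real.exp (-(l * |x|)) : ℝ) : ℂ) =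
      (1 / (Real.pi : ℂ)) *
        ∫ y : ℝ, Complex.exp (Complex.I * (x : ℂ) * (y : ℂ)) *
          ((l : ℂ) / ((l : ℂ) ^ 2 + (y : ℂ) ^ 2)) := by
  exact stmt_2_aux l hl x
end

section
/- For every real s ≥ 0, the kernel K(x,y) = (1 − xy)^{−s} on the open interval (−1, 1) is positive definite: for every m ∈ ℕ, all x₁,…,x_m ∈ (−1,1) and all c₁,…,c_m ∈ ℂ, the sum ∑_{j,k=1}^m c_j · conj(c_k) · (1 − x_j x_k)^{−s} is a nonnegative real number. -/
open scoped ComplexOrder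

open MeasureTheory Set

private lemma expHasSum (a : ℝ) : HasSum (fun n : ℕ => a ^ n / (n).factorial) (Real.exp a) := by
  rw [Real.exp_eq_exp_ℝ]
  exact NormedSpace.expSeries_div_hasSum_exp a

private lemma exp_kernel_nonneg {m : ℕ} (x v : Fin m → ℝ) {t : ℝ} (ht : 0 ≤ t) :
    0 ≤ ∑ j : Fin m, ∑ k : Fin m, v j * v k * Real.exp (t * (x j * x k)) := by
  have h : ∀ p : Fin m × Fin m, HasSum
      (fun n : ℕ => (t ^ n / (n).factorial) * ((v p.1 * x p.1 ^ n) * (v p.2 * x p.2 ^ n)))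
      (v p.1 * v p.2 * Real.exp (t * (x p.1 * x p.2))) := by
    intro p
    have := (expHasSum (t * (x p.1 * x p.2))).mul_left (v p.1 * v p.2)
    convert this using 2 with n
    · rfl
    ring
  have H := hasSum_sum (f := fun (p : Fin m × Fin m) (n : ℕ) =>
      (t ^ n / (n).factorial) * ((v p.1 * x p.1 ^ n) * (v p.2 * x p.2 ^ n)))
    (s := Finset.univ) (fun p _ => h p)
  have key : ∀ n : ℕ, ∑ p : Fin m × Fin m,
      (t ^ n / (n).factorial) * ((v p.1 * x p.1 ^ n) * (v p.2 * x p.2 ^ n))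
      = (t ^ n / (n).factorial) * (∑ j : Fin m, v j * x j ^ n) ^ 2 := by
    intro n
    rw [sq, Finset.sum_mul_sum, Fintype.sum_prod_type]
    simp_rw [Finset.mul_sum]
  have := H.nonneg fun n => by rw [key n]; positivity
  simpa [Fintype.sum_prod_type] using this

private lemma real_kernel_nonneg (s : ℝ) (hs : 0 ≤ s) {m : ℕ} (x : Fin m → ℝ)
    (hx : ∀ i, x i ∈ Set.Ioo (-1 : ℝ) 1) (v : Fin m → ℝ) :
    0 ≤ ∑ j : Fin m, ∑ k : Fin m, v j * v k * (1 - x j * x k) ^ (-s) := by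
  have hpos : ∀ j k : Fin m, 0 < 1 - x j * x k := by
    intro j k
    have h1 := (hx j).1; have h2 := (hx j).2
    have h3 := (hx k).1; have h4 := (hx k).2
    nlinarith [mul_pos (by linarith : (0:ℝ) < 1 - x j) (by linarith : (0:ℝ) < 1 + x k),
      mul_pos (by linarith : (0:ℝ) < 1 + x j) (by linarith : (0:ℝ) < 1 - x k)]
  rcases eq_or_lt_of_le hs with rfl | hs'
  · simp only [neg_zero, Real.rpow_zero, mul_one]
    rw [← Finset.sum_mul_sum]
    exact mul_self_nonneg _
  · have hΓ : 0 < Real.Gamma s := Real.Gamma_pos_of_pos hs'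
    -- integrability of each term
    have intg : ∀ j k : Fin m, IntegrableOn
        (fun t : ℝ => v j * v k * (t ^ (s - 1) * Real.exp (-((1 - x j * x k) * t)))) (Ioi 0) := by
      intro j k
      have h := integrableOn_rpow_mul_exp_neg_mul_rpow (p := 1) (s := s - 1)
        (b := 1 - x j * x k) (by linarith) one_pos (hpos j k)
      have h' : IntegrableOn (fun t : ℝ => t ^ (s - 1) * Real.exp (-((1 - x j * x k) * t)))
          (Ioi 0) := by
        refine h.congr_fun (fun t ht => ?_) measurableSet_Ioi
        simp only [Real.rpow_one, neg_mul]
      exact h'.const_mul _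
    -- the integral representation
    have key : ∀ j k : Fin m, v j * v k * (1 - x j * x k) ^ (-s)
        = (Real.Gamma s)⁻¹ * ∫ t in Ioi (0:ℝ),
            v j * v k * (t ^ (s - 1) * Real.exp (-((1 - x j * x k) * t))) := by
      intro j k
      rw [MeasureTheory.integral_const_mul, Real.integral_rpow_mul_exp_neg_mul_Ioi hs' (hpos j k),
        one_div, Real.inv_rpow (hpos j k).le, ← Real.rpow_neg (hpos j k).le]
      field_simp
    calc ∑ j : Fin m, ∑ k : Fin m, v j * v k * (1 - x j * x k) ^ (-s)
        = ∑ p : Fin m × Fin m, v p.1 * v p.2 * (1 - x p.1 * x p.2) ^ (-s) := by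
          rw [Fintype.sum_prod_type]
      _ = (Real.Gamma s)⁻¹ * ∑ p : Fin m × Fin m, ∫ t in Ioi (0:ℝ),
            v p.1 * v p.2 * (t ^ (s - 1) * Real.exp (-((1 - x p.1 * x p.2) * t))) := by
          rw [Finset.mul_sum]
          exact Finset.sum_congr rfl fun p _ => key p.1 p.2
      _ = (Real.Gamma s)⁻¹ * ∫ t in Ioi (0:ℝ), ∑ p : Fin m × Fin m,
            v p.1 * v p.2 * (t ^ (s - 1) * Real.exp (-((1 - x p.1 * x p.2) * t))) := by
          congr 1
          exact (MeasureTheory.integral_finset_sum (μ := MeasureTheory.volume.restrict (Ioi 0))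
            (f := fun (p : Fin m × Fin m) (t : ℝ) =>
              v p.1 * v p.2 * (t ^ (s - 1) * Real.exp (-((1 - x p.1 * x p.2) * t))))
            Finset.univ (fun p _ => intg p.1 p.2)).symm
      _ ≥ 0 := by
          rw [ge_iff_le]
          refine mul_nonneg (inv_nonneg.mpr hΓ.le) ?_
          refine MeasureTheory.setIntegral_nonneg measurableSet_Ioi fun t ht => ?_
          have hE := exp_kernel_nonneg x v (le_of_lt ht)
          have hrw : ∑ p : Fin m × Fin m,
              v p.1 * v p.2 * (t ^ (s - 1) * Real.exp (-((1 - x p.1 * x p.2) * t)))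
              = t ^ (s - 1) * Real.exp (-t) *
                ∑ j : Fin m, ∑ k : Fin m, v j * v k * Real.exp (t * (x j * x k)) := by
            rw [Fintype.sum_prod_type]
            simp_rw [Finset.mul_sum]
            refine Finset.sum_congr rfl fun j _ => Finset.sum_congr rfl fun k _ => ?_
            rw [show -((1 - x j * x k) * t) = -t + t * (x j * x k) by ring, Real.exp_add]
            ring
          rw [hrw]
          have htpos : (0:ℝ) < t := ht
          have : (0:ℝ) ≤ t ^ (s - 1) * Real.exp (-t) :=
            mul_nonneg (Real.rpow_nonneg htpos.le _) (Real.exp_pos _).le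
          exact mul_nonneg this hE

/-- For every real `s ≥ 0`, the kernel `K(x,y) = (1 - xy)^{-s}` on the
open interval `(-1,1)` is positive definite: for all `x₁,…,x_m ∈ (-1,1)` and
`c₁,…,c_m ∈ ℂ`, the sum `∑ c_j conj(c_k) (1 - x_j x_k)^{-s}` is a nonnegative real. -/
theorem stmt_7 (s : ℝ) (hs : 0 ≤ s) :
    ∀ (m : ℕ) (x : Fin m → ℝ), (∀ i, x i ∈ Set.Ioo (-1 : ℝ) 1) → ∀ c : Fin m → ℂ,
      0 ≤ ∑ j : Fin m, ∑ k : Fin m,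
        c j * (starRingEnd ℂ) (c k) * (((1 - x j * x k) ^ (-s) : ℝ) : ℂ) := by
  intro m x hx c
  set A : Fin m → Fin m → ℝ := fun j k => (1 - x j * x k) ^ (-s) with hA
  have hAsymm : ∀ j k, A j k = A k j := fun j k => by simp only [hA, mul_comm]
  rw [Complex.nonneg_iff]
  constructor
  · -- real part
    have h1 := real_kernel_nonneg s hs x hx fun i => (c i).re
    have h2 := real_kernel_nonneg s hs x hx fun i => (c i).im
    have hre : (∑ j : Fin m, ∑ k : Fin m, c j * (starRingEnd ℂ) (c k) * ((A j k : ℝ) : ℂ)).re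
        = (∑ j : Fin m, ∑ k : Fin m, (c j).re * (c k).re * A j k)
          + ∑ j : Fin m, ∑ k : Fin m, (c j).im * (c k).im * A j k := by
      rw [Complex.re_sum, ← Finset.sum_add_distrib]
      refine Finset.sum_congr rfl fun j _ => ?_
      rw [Complex.re_sum, ← Finset.sum_add_distrib]
      refine Finset.sum_congr rfl fun k _ => ?_
      simp only [Complex.mul_re, Complex.mul_im, Complex.ofReal_re, Complex.ofReal_im, RingHom.id_apply, Complex.conj_re, Complex.conj_im]
      ring
    rw [hre]
    exact add_nonneg h1 h2
  · -- imaginary part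
    have him : (∑ j : Fin m, ∑ k : Fin m, c j * (starRingEnd ℂ) (c k) * ((A j k : ℝ) : ℂ)).im
        = ∑ j : Fin m, ∑ k : Fin m, ((c j).im * (c k).re - (c j).re * (c k).im) * A j k := by
      rw [Complex.im_sum]
      refine Finset.sum_congr rfl fun j _ => ?_
      rw [Complex.im_sum]
      refine Finset.sum_congr rfl fun k _ => ?_
      simp only [Complex.mul_re, Complex.mul_im, Complex.ofReal_re, Complex.ofReal_im, RingHom.id_apply, Complex.conj_re, Complex.conj_im]
      ring
    rw [him]
    set f : Fin m → Fin m → ℝ := fun j k => ((c j).im * (c k).re - (c j).re * (c k).im) * A j k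
      with hf
    have hanti : ∀ j k, f j k + f k j = 0 := by
      intro j k
      simp only [hf, hAsymm j k]
      ring
    have hswap : ∑ j : Fin m, ∑ k : Fin m, f j k = ∑ j : Fin m, ∑ k : Fin m, f k j :=
      Finset.sum_comm
    have h2 : (∑ j : Fin m, ∑ k : Fin m, f j k) + ∑ j : Fin m, ∑ k : Fin m, f j k = 0 := by
      nth_rewrite 2 [hswap]
      rw [← Finset.sum_add_distrib]
      refine Finset.sum_eq_zero fun j _ => ?_
      rw [← Finset.sum_add_distrib]
      exact Finset.sum_eq_zero fun k _ => hanti j k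
    have : ∑ j : Fin m, ∑ k : Fin m, f j k = 0 := by linarith
    rw [this]
end

section
/- Let E be a complex Hilbert space, G a group, τ : G → G an involutive automorphism, and S ⊆ G a nonempty subsemigroup (closed under the group multiplication) such that τ(s)⁻¹ ∈ S for all s ∈ S. Let π : G → U(E) be a homomorphism into the unitary group of E, and let θ be a unitary involution of E (θ² = id) with θ ∘ π(g) ∘ θ = π(τ(g)) for all g ∈ G. Let E₊ ⊆ E be a closed subspace with Re⟨θv, v⟩ ≥ 0 for all v ∈ E₊ and π(s)(E₊) ⊆ E₊ for all s ∈ S. Then for all s, t ∈ S and v, w ∈ E₊: (a) ⟨θ(π(s)v), w⟩ = ⟨θv, π(τ(s)⁻¹)w⟩; and (b) Re⟨θ(π(s)v), π(s)v⟩ ≤ Re⟨θv, v⟩ (i.e. S acts by contractions with respect to the positive semidefinite form ⟨θ·,·⟩ on E₊). -/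
open scoped ComplexInnerProductSpace

/-- Let `π` be a reflection positive unitary representation of `(G,τ,S)`
on the reflection positive Hilbert space `(E, E₊, θ)`. Then for `s, t ∈ S` and
`v, w ∈ E₊`: (a) `⟨θ(π(s)v), w⟩ = ⟨θ v, π(τ(s)⁻¹) w⟩`, and (b)
`Re⟨θ(π(s)v), π(s)v⟩ ≤ Re⟨θ v, v⟩`, i.e. `S` acts by contractions with respect to the
positive semidefinite form `⟨θ·,·⟩` on `E₊`. -/
theorem stmt_13
    (E : Type*) [NormedAddCommGroup E] [InnerProductSpace ℂ E] [CompleteSpace E]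
    (G : Type*) [Group G] (τ : G →* G) (hτ : ∀ g, τ (τ g) = g)
    (S : Set G) (hSne : S.Nonempty) (hSmul : ∀ s ∈ S, ∀ t ∈ S, s * t ∈ S)
    (hSsharp : ∀ s ∈ S, (τ s)⁻¹ ∈ S)
    (π : G →* (E ≃ₗᵢ[ℂ] E))
    (θ : E ≃ₗᵢ[ℂ] E) (hθ : ∀ v, θ (θ v) = v)
    (hcomm : ∀ (g : G) (v : E), θ (π g (θ v)) = π (τ g) v)
    (Ep : Submodule ℂ E) (hEpClosed : IsClosed (Ep : Set E))
    (hEpPos : ∀ v ∈ Ep, 0 ≤ (⟪θ v, v⟫ : ℂ).re)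
    (hEpInv : ∀ s ∈ S, ∀ v ∈ Ep, π s v ∈ Ep) :
    (∀ s ∈ S, ∀ v ∈ Ep, ∀ w ∈ Ep,
        (⟪θ (π s v), w⟫ : ℂ) = ⟪θ v, π ((τ s)⁻¹) w⟫) ∧
    (∀ s ∈ S, ∀ v ∈ Ep,
        ((⟪θ (π s v), π s v⟫ : ℂ)).re ≤ ((⟪θ v, v⟫ : ℂ)).re) := by
  -- multiplicativity of the action
  have hmul : ∀ (a b : G) (x : E), π (a * b) x = π a (π b x) := by
    intro a b x; rw [map_mul]; rfl
  -- part (a), for all vectors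
  have partA : ∀ (g : G) (v w : E),
      (⟪θ (π g v), w⟫ : ℂ) = ⟪θ v, π ((τ g)⁻¹) w⟫ := by
    intro g v w
    have h1 : θ (π g v) = π (τ g) (θ v) := by
      conv_lhs => rw [← hθ v]
      exact hcomm g (θ v)
    rw [h1]
    have h2 : w = π (τ g) (π ((τ g)⁻¹) w) := by
      rw [← hmul, mul_inv_cancel, map_one]; rfl
    conv_lhs => rw [h2]
    exact (π (τ g)).inner_map_map _ _
  -- the quadratic form
  set q : E → ℝ := fun v => (⟪θ v, v⟫ : ℂ).re with hq
  have hqnn : ∀ v ∈ Ep, 0 ≤ q v := hEpPos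
  -- hermitian symmetry of the form
  have herm : ∀ v w : E, (⟪θ w, v⟫ : ℂ) = (starRingEnd ℂ) ⟪θ v, w⟫ := by
    intro v w
    rw [← inner_conj_symm]
    congr 1
    calc (⟪v, θ w⟫ : ℂ) = ⟪θ v, θ (θ w)⟫ := (θ.inner_map_map v (θ w)).symm
      _ = ⟪θ v, w⟫ := by rw [hθ]
  -- expansion of q on a real line
  have expand : ∀ (v w : E) (t : ℝ),
      q (v + (t : ℂ) • w) = q v + 2 * t * (⟪θ v, w⟫ : ℂ).re + t ^ 2 * q w := by
    intro v w t
    have : (⟪θ (v + (t : ℂ) • w), v + (t : ℂ) • w⟫ : ℂ)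
        = ⟪θ v, v⟫ + (t : ℂ) * ⟪θ v, w⟫ + (t : ℂ) * (starRingEnd ℂ) ⟪θ v, w⟫
          + (t : ℂ) * (t : ℂ) * ⟪θ w, w⟫ := by
      rw [map_add, map_smul, inner_add_left, inner_add_right, inner_add_right,
        inner_smul_left, inner_smul_right, inner_smul_left, inner_smul_right,
        herm v w]
      rw [Complex.conj_ofReal]
      ring
    simp only [hq, this]
    simp only [Complex.add_re, Complex.mul_re, Complex.ofReal_re, Complex.ofReal_im,
      Complex.conj_re, Complex.conj_im]
    ring_nf
    simp [← Complex.ofReal_pow]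
  -- Cauchy-Schwarz for the real part of the semidefinite form
  have CS : ∀ v ∈ Ep, ∀ w ∈ Ep, ((⟪θ v, w⟫ : ℂ).re) ^ 2 ≤ q v * q w := by
    intro v hv w hw
    set R := (⟪θ v, w⟫ : ℂ).re with hR
    have key : ∀ t : ℝ, 0 ≤ q v + 2 * t * R + t ^ 2 * q w := by
      intro t
      have hmem : v + (t : ℂ) • w ∈ Ep := Ep.add_mem hv (Ep.smul_mem _ hw)
      have := hqnn _ hmem
      rwa [expand v w t] at this
    have hv0 := hqnn v hv
    have hw0 := hqnn w hw
    rcases eq_or_lt_of_le hw0 with hw1 | hw1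
    · -- q w = 0
      rcases eq_or_ne R 0 with hR0 | hR0
      · rw [hR0]
        simpa using mul_nonneg hv0 hw0
      · exfalso
        have h := key (-(q v + 1) / (2 * R))
        rw [← hw1] at h
        have h2R : (2 * R) ≠ 0 := mul_ne_zero two_ne_zero hR0
        have he : 2 * (-(q v + 1) / (2 * R)) * R = -(q v + 1) := by
          field_simp
        rw [he] at h
        linarith
    · have hne : q w ≠ 0 := ne_of_gt hw1
      have h := key (-R / q w)
      have h2 : 0 ≤ (q v + 2 * (-R / q w) * R + (-R / q w) ^ 2 * q w) * q w :=
        mul_nonneg h hw0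
      have h3 : (q v + 2 * (-R / q w) * R + (-R / q w) ^ 2 * q w) * q w
          = q v * q w - R ^ 2 := by
        field_simp
        ring
      rw [h3] at h2
      linarith
  -- q (π g v) in terms of the form
  have keyQ : ∀ (g : G) (v : E), q (π g v) = (⟪θ v, π ((τ g)⁻¹ * g) v⟫ : ℂ).re := by
    intro g v
    simp only [hq]
    rw [partA g v (π g v), ← hmul]
  -- S is closed under positive powers
  have powMem : ∀ u ∈ S, ∀ n : ℕ, u ^ (n + 1) ∈ S := by
    intro u hu n
    induction n with
    | zero => simpa using hu
    | succ k ih => rw [pow_succ]; exact hSmul _ ih _ hu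
  -- norm bound on q of orbit vectors
  have qle : ∀ (g : G) (v : E), q (π g v) ≤ ‖v‖ ^ 2 := by
    intro g v
    have h : (⟪θ (π g v), π g v⟫ : ℂ).re ≤ ‖θ (π g v)‖ * ‖π g v‖ := by
      simpa using re_inner_le_norm (𝕜 := ℂ) (θ (π g v)) (π g v)
    rw [θ.norm_map, (π g).norm_map] at h
    simpa [hq, sq] using h
  -- contraction for symmetric elements
  have selfadj : ∀ u ∈ S, (τ u)⁻¹ = u → ∀ v ∈ Ep, q (π u v) ≤ q v := by
    intro u hu huu v hv
    set a : ℕ → ℝ := fun n => q (π (u ^ (2 ^ n)) v) with ha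
    have hτpow : ∀ k : ℕ, (τ (u ^ k))⁻¹ = u ^ k := by
      intro k
      rw [map_pow, ← inv_pow, huu]
    have hmem : ∀ n : ℕ, π (u ^ (2 ^ n)) v ∈ Ep := by
      intro n
      have hp : u ^ (2 ^ n) ∈ S := by
        obtain ⟨m, hm⟩ : ∃ m, 2 ^ n = m + 1 :=
          ⟨2 ^ n - 1, (Nat.sub_add_cancel Nat.one_le_two_pow).symm⟩
        rw [hm]; exact powMem u hu m
      exact hEpInv _ hp v hv
    have hann : ∀ n, 0 ≤ a n := fun n => hqnn _ (hmem n)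
    have step : ∀ n, (a n) ^ 2 ≤ q v * a (n + 1) := by
      intro n
      have h1 : a n = (⟪θ v, π (u ^ (2 ^ (n + 1))) v⟫ : ℂ).re := by
        have hsq : u ^ (2 ^ n) * u ^ (2 ^ n) = u ^ (2 ^ (n + 1)) := by
          rw [← pow_add]
          congr 1
          omega
        rw [ha]
        simp only
        rw [keyQ (u ^ (2 ^ n)) v, hτpow, hsq]
      rw [h1]
      exact CS v hv _ (hmem (n + 1))
    have hb : ∀ n, a n ≤ ‖v‖ ^ 2 := fun n => qle _ v
    have ha0 : a 0 = q (π u v) := by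
      simp [ha]
    by_contra hcon
    push_neg at hcon
    rw [← ha0] at hcon
    have hqvpos : 0 < q v := by
      rcases (hqnn v hv).lt_or_eq with h | h
      · exact h
      · exfalso
        nlinarith [step 0, hann 0, hann 1]
    set r : ℝ := a 0 / q v with hrdef
    have hr1 : 1 < r := (one_lt_div hqvpos).2 hcon
    have grow : ∀ n, q v * r ^ (2 ^ n) ≤ a n := by
      intro n
      induction n with
      | zero =>
        simp only [pow_zero, pow_one, hrdef]
        rw [mul_div_cancel₀ _ (ne_of_gt hqvpos)]
      | succ n ih =>
        have e : r ^ (2 ^ (n + 1)) = (r ^ (2 ^ n)) ^ 2 := by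
          rw [pow_succ, pow_mul]
        rw [e]
        have h1 : (q v * r ^ 2 ^ n) * (q v * r ^ 2 ^ n) ≤ a n * a n :=
          mul_le_mul ih ih (by positivity) (hann n)
        have h2 := step n
        nlinarith [hqvpos]
    obtain ⟨n, hn⟩ := pow_unbounded_of_one_lt (‖v‖ ^ 2 / q v) hr1
    have h2n : r ^ n ≤ r ^ (2 ^ n) :=
      pow_le_pow_right₀ (le_of_lt hr1) (Nat.lt_two_pow_self (n := n)).le
    have hlt : ‖v‖ ^ 2 < q v * r ^ (2 ^ n) := by
      rw [div_lt_iff₀ hqvpos] at hn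
      nlinarith [hqvpos]
    linarith [grow n, hb n]
  constructor
  · intro s _ v _ w _
    exact partA s v w
  · intro s hs v hv
    show q (π s v) ≤ q v
    have husym : (τ ((τ s)⁻¹ * s))⁻¹ = (τ s)⁻¹ * s := by
      rw [map_mul, map_inv, hτ, mul_inv_rev, inv_inv]
    have huS : (τ s)⁻¹ * s ∈ S := hSmul _ (hSsharp s hs) _ hs
    have h1 : q (π s v) = (⟪θ v, π ((τ s)⁻¹ * s) v⟫ : ℂ).re := keyQ s v
    have h2 : ((⟪θ v, π ((τ s)⁻¹ * s) v⟫ : ℂ).re) ^ 2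
        ≤ q v * q (π ((τ s)⁻¹ * s) v) := CS v hv _ (hEpInv _ huS v hv)
    have h3 : q (π ((τ s)⁻¹ * s) v) ≤ q v := selfadj _ huS husym v hv
    have h4 : 0 ≤ q (π s v) := hqnn _ (hEpInv s hs v hv)
    nlinarith [hqnn v hv]
end

section
/- Let E be a complex Hilbert space, G a group, τ : G → G an involutive automorphism, and S ⊆ G a subsemigroup with τ(s)⁻¹ ∈ S for all s ∈ S. Let π : G → U(E) be a homomorphism into the unitary group of E and θ a unitary involution of E with θ ∘ π(g) ∘ θ = π(τ(g)) for all g. Let F ⊆ E be a closed subspace with θv = v for every v ∈ F, assume that the closed subspace E₊ spanned by {π(s)v : s ∈ S, v ∈ F} satisfies Re⟨θu, u⟩ ≥ 0 for all u ∈ E₊, and let P : E → F be the orthogonal projection. Define φ(g) := P ∘ π(g)|_F as a bounded operator on F. Then: (a) φ(1) = id_F; (b) φ(τ(g)) = φ(g) for all g ∈ G; (c) the operator-valued kernel (g,h) ↦ φ(g h⁻¹) is positive definite on G, i.e. for all m ∈ ℕ, g₁,…,g_m ∈ G and v₁,…,v_m ∈ F the sum ∑_{j,k=1}^m ⟨φ(g_j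 g_k⁻¹) v_k, v_j⟩ is a nonnegative real number; and (d) the kernel (s,t) ↦ φ(s · τ(t)⁻¹) is positive definite on S in the same sense. -/
open scoped ComplexInnerProductSpace ComplexOrder

/-- Let `(π, E)` be a unitary representation of `G` with unitary
involution `θ` satisfying `θ π(g) θ = π(τ(g))`, let `F ⊆ E` be a closed subspace fixed
pointwise by `θ`, and assume the closed subspace `E₊` generated by `π(S)F` is
`θ`-positive. Then the `B(F)`-valued function `φ(g) = P π(g) P*` (expressed via its
matrix coefficients `⟨φ(g)v, w⟩ = ⟨π(g)v, w⟩` for `v, w ∈ F`) satisfies: (a) `φ(1) = 1`;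
(b) `φ ∘ τ = φ`; (c) the kernel `(g,h) ↦ φ(g h⁻¹)` is positive definite on `G`;
(d) the kernel `(s,t) ↦ φ(s τ(t)⁻¹)` is positive definite on `S`. -/
theorem stmt_14
    (E : Type*) [NormedAddCommGroup E] [InnerProductSpace ℂ E] [CompleteSpace E]
    (G : Type*) [Group G] (τ : G →* G) (hτ : ∀ g, τ (τ g) = g)
    (S : Set G) (hSne : S.Nonempty) (hSmul : ∀ s ∈ S, ∀ t ∈ S, s * t ∈ S)
    (hSsharp : ∀ s ∈ S, (τ s)⁻¹ ∈ S)
    (π : G →* (E ≃ₗᵢ[ℂ] E))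
    (θ : E ≃ₗᵢ[ℂ] E) (hθ : ∀ v, θ (θ v) = v)
    (hcomm : ∀ (g : G) (v : E), θ (π g (θ v)) = π (τ g) v)
    (F : Submodule ℂ E) (hFClosed : IsClosed (F : Set E))
    (hFfix : ∀ v ∈ F, θ v = v)
    (hpos : ∀ u ∈ closure
        ((Submodule.span ℂ {w : E | ∃ s ∈ S, ∃ v ∈ F, w = π s v} : Submodule ℂ E) : Set E),
      0 ≤ ((⟪θ u, u⟫ : ℂ)).re) :
    (∀ v ∈ F, ∀ w ∈ F, (⟪w, π 1 v⟫ : ℂ) = ⟪w, v⟫) ∧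
    (∀ (g : G), ∀ v ∈ F, ∀ w ∈ F, (⟪w, π (τ g) v⟫ : ℂ) = ⟪w, π g v⟫) ∧
    (∀ (m : ℕ) (g : Fin m → G) (v : Fin m → E), (∀ i, v i ∈ F) →
      0 ≤ ∑ j : Fin m, ∑ k : Fin m, (⟪v j, π (g j * (g k)⁻¹) (v k)⟫ : ℂ)) ∧
    (∀ (m : ℕ) (g : Fin m → G) (v : Fin m → E), (∀ i, g i ∈ S) → (∀ i, v i ∈ F) →
      0 ≤ ∑ j : Fin m, ∑ k : Fin m, (⟪v j, π (g j * (τ (g k))⁻¹) (v k)⟫ : ℂ)) := by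

  -- Helper: π g preserves inner products, and moving π g across inner
  have hinn : ∀ (g : G) (a b : E), (⟪π g a, π g b⟫ : ℂ) = ⟪a, b⟫ := fun g a b =>
    LinearIsometryEquiv.inner_map_map (π g) a b
  have hmove : ∀ (g : G) (a b : E), (⟪a, π g b⟫ : ℂ) = ⟪π g⁻¹ a, b⟫ := by
    intro g a b
    have : π g (π g⁻¹ a) = a := by
      have : π g (π g⁻¹ a) = (π g * π g⁻¹) a := rfl
      rw [this, ← map_mul, mul_inv_cancel, map_one]; rfl
    calc (⟪a, π g b⟫ : ℂ) = ⟪π g (π g⁻¹ a), π g b⟫ := by rw [this]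
      _ = ⟪π g⁻¹ a, b⟫ := hinn g _ _
  have hmul : ∀ (g h : G) (a : E), π (g * h) a = π g (π h a) := by
    intro g h a; rw [map_mul]; rfl
  refine ⟨?_, ?_, ?_, ?_⟩
  · intro v hv w hw; rw [map_one]; rfl
  · intro g v hv w hw
    have h1 : π (τ g) v = θ (π g v) := by
      rw [← hcomm g v, hFfix v hv]
    rw [h1]
    calc (⟪w, θ (π g v)⟫ : ℂ) = ⟪θ w, θ (θ (π g v))⟫ := (LinearIsometryEquiv.inner_map_map θ _ _).symm
      _ = ⟪w, π g v⟫ := by rw [hθ, hFfix w hw]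
  · intro m g v hv
    set u : E := ∑ k, π (g k)⁻¹ (v k) with hu
    have key : ∑ j, ∑ k, (⟪v j, π (g j * (g k)⁻¹) (v k)⟫ : ℂ) = ⟪u, u⟫ := by
      rw [hu, sum_inner]
      refine Finset.sum_congr rfl fun j _ => ?_
      rw [inner_sum]
      refine Finset.sum_congr rfl fun k _ => ?_
      rw [hmul, hmove]
    rw [key, @inner_self_eq_norm_sq_to_K ℂ]
    positivity
  · intro m g v hg hv
    set t : Fin m → G := fun k => (τ (g k))⁻¹ with ht
    set u : E := ∑ k, π (t k) (v k) with hu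
    have humem : u ∈ closure
        ((Submodule.span ℂ {w : E | ∃ s ∈ S, ∃ v ∈ F, w = π s v} : Submodule ℂ E) : Set E) := by
      apply subset_closure
      refine Submodule.sum_mem _ fun k _ => Submodule.subset_span ?_
      exact ⟨t k, hSsharp _ (hg k), v k, hv k, rfl⟩
    -- θ (π (t j) (v j)) = π (g j)⁻¹ (v j)
    have hθu : ∀ j, θ (π (t j) (v j)) = π (g j)⁻¹ (v j) := by
      intro j
      have : θ (π (t j) (v j)) = θ (π (t j) (θ (v j))) := by rw [hFfix _ (hv j)]
      rw [this, hcomm]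
      congr 1
      rw [ht]
      simp [hτ]
    have key : ∑ j, ∑ k, (⟪v j, π (g j * (τ (g k))⁻¹) (v k)⟫ : ℂ) = ⟪θ u, u⟫ := by
      rw [hu, map_sum, sum_inner]
      refine Finset.sum_congr rfl fun j _ => ?_
      rw [inner_sum]
      refine Finset.sum_congr rfl fun k _ => ?_
      rw [hθu j, ← hmove, ← hmul]
    rw [key]
    have hre : 0 ≤ ((⟪θ u, u⟫ : ℂ)).re := hpos u humem
    have hreal : (⟪u, θ u⟫ : ℂ) = ⟪θ u, u⟫ := by
      calc (⟪u, θ u⟫ : ℂ) = ⟪θ u, θ (θ u)⟫ := (LinearIsometryEquiv.inner_map_map θ _ _).symm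
        _ = ⟪θ u, u⟫ := by rw [hθ]
    have hconj : (starRingEnd ℂ) (⟪θ u, u⟫ : ℂ) = ⟪θ u, u⟫ := by
      rw [inner_conj_symm, hreal]
    have him : ((⟪θ u, u⟫ : ℂ)).im = 0 := Complex.conj_eq_iff_im.mp hconj
    rw [Complex.le_def]
    simp [hre, him]
end

section
/- Let n ≥ 1 and let Ω = {x ∈ ℝⁿ : x₀ > 0 and x₀² > x₁² + ⋯ + x_{n−1}²} be the open forward light cone. For every z ∈ ℂⁿ whose real part lies in Ω (i.e. z = x + iy with x ∈ Ω, y ∈ ℝⁿ), the value of the complex bilinear Lorentz form Δ(z) := z₀² − z₁² − ⋯ − z_{n−1}² is nonzero. -/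
/-- Let `Ω ⊆ ℝⁿ` be the open forward light cone. For every `z ∈ ℂⁿ` with
`Re z ∈ Ω`, the complex bilinear Lorentz form `Δ(z) = z₀² - z₁² - ⋯ - z_{n-1}²` is
nonzero. -/
theorem stmt_15 (n : ℕ) (hn : 0 < n) (z : Fin n → ℂ)
    (hx0 : 0 < (z ⟨0, hn⟩).re)
    (hcone : ∑ j : Fin n, (if j = (⟨0, hn⟩ : Fin n) then 0 else ((z j).re) ^ 2)
        < ((z ⟨0, hn⟩).re) ^ 2) :
    (z ⟨0, hn⟩) ^ 2 - ∑ j : Fin n, (if j = (⟨0, hn⟩ : Fin n) then 0 else (z j) ^ 2) ≠ 0 := by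
  set e : Fin n := ⟨0, hn⟩ with he
  set x : Fin n → ℝ := fun j => (z j).re with hx
  set y : Fin n → ℝ := fun j => (z j).im with hy
  set A : ℝ := ∑ j : Fin n, (if j = e then 0 else x j ^ 2) with hA
  set B : ℝ := ∑ j : Fin n, (if j = e then 0 else y j ^ 2) with hB
  set C : ℝ := ∑ j : Fin n, (if j = e then 0 else x j * y j) with hC
  intro heq
  have hre := congrArg Complex.re heq
  have him := congrArg Complex.im heq
  simp only [Complex.sub_re, Complex.sub_im, Complex.re_sum, Complex.im_sum, sq,
    Complex.mul_re, Complex.mul_im, apply_ite Complex.re, apply_ite Complex.im,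
    Complex.zero_re, Complex.zero_im] at hre him
  have h1 : (∑ j : Fin n, (if j = e then (0:ℝ) else (z j).re * (z j).re - (z j).im * (z j).im))
      = A - B := by
    rw [hA, hB, ← Finset.sum_sub_distrib]
    refine Finset.sum_congr rfl fun j _ => ?_
    split <;> ring
  have h2 : (∑ j : Fin n, (if j = e then (0:ℝ) else (z j).re * (z j).im + (z j).im * (z j).re))
      = 2 * C := by
    rw [hC, Finset.mul_sum]
    refine Finset.sum_congr rfl fun j _ => ?_
    split <;> ring
  rw [h1] at hre
  rw [h2] at him
  have hCS := Finset.sum_mul_sq_le_sq_mul_sq Finset.univ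
    (fun j => if j = e then (0:ℝ) else x j) (fun j => if j = e then (0:ℝ) else y j)
  have hCS' : C ^ 2 ≤ A * B := by
    refine le_trans (le_of_eq ?_) (le_trans hCS (le_of_eq ?_))
    · congr 1
      refine Finset.sum_congr rfl fun j _ => ?_
      split <;> simp
    · congr 1 <;> refine Finset.sum_congr rfl fun j _ => ?_ <;> split <;> simp
  have hBnn : 0 ≤ B := Finset.sum_nonneg fun j _ => by split <;> positivity
  have hAnn : 0 ≤ A := Finset.sum_nonneg fun j _ => by split <;> positivity
  have h3 : (z e).re ^ 2 * (z e).im ^ 2 ≤ (z e).re ^ 2 * B := by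
    have hCval : C = (z e).re * (z e).im := by linarith
    rw [hCval] at hCS'
    have hAB : A * B ≤ (z e).re ^ 2 * B := mul_le_mul_of_nonneg_right hcone.le hBnn
    nlinarith [hCS']
  have h4 : (z e).im ^ 2 ≤ B := le_of_mul_le_mul_left h3 (by positivity)
  nlinarith [h4, hre, hcone]
end

section
/- Let G be a group acting by homeomorphisms on a topological space X, let τ : G → G be an involutive automorphism, and let T : X → X be a homeomorphism with T ∘ T = id and T(g·x) = τ(g)·T(x) for all g ∈ G, x ∈ X. Let D ⊆ X be an open subset with T(D) = interior(X \ D). Then the compression semigroup S_D := {g ∈ G : g·D ⊆ D} is invariant under the involution g ↦ g♯ := τ(g)⁻¹; that is, if g·D ⊆ D then τ(g)⁻¹·D ⊆ D. -/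
/-- Let a group `G` act by homeomorphisms on a topological space `X`,
let `τ` be an involutive automorphism of `G`, and `T : X → X` an involutive
homeomorphism with `T(g·x) = τ(g)·T(x)`. If `D ⊆ X` is open with
`T(D) = interior(X \ D)`, then the compression semigroup `S_D = {g : g·D ⊆ D}` is
invariant under `g ↦ τ(g)⁻¹`: if `g·D ⊆ D` then `τ(g)⁻¹·D ⊆ D`. -/
theorem stmt_19 (G X : Type*) [Group G] [TopologicalSpace X] [MulAction G X]
    (hcont : ∀ g : G, Continuous (fun x : X => g • x))
    (τ : G →* G) (hτ : ∀ g, τ (τ g) = g)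
    (T : X → X) (hTcont : Continuous T) (hTinv : ∀ x, T (T x) = x)
    (hequiv : ∀ (g : G) (x : X), T (g • x) = τ g • T x)
    (D : Set X) (hDopen : IsOpen D) (hTD : T '' D = interior Dᶜ)
    (g : G) (hg : ∀ x ∈ D, g • x ∈ D) :
    ∀ x ∈ D, (τ g)⁻¹ • x ∈ D := by
  -- Step 1: g⁻¹ maps interior Dᶜ into interior Dᶜ.
  have key : ∀ y ∈ interior Dᶜ, g⁻¹ • y ∈ interior Dᶜ := by
    intro y hy
    have hU : IsOpen ((fun x : X => g • x) ⁻¹' interior Dᶜ) :=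
      (isOpen_interior).preimage (hcont g)
    have hsub : (fun x : X => g • x) ⁻¹' interior Dᶜ ⊆ Dᶜ := by
      intro x hx
      intro hxD
      have : g • x ∈ Dᶜ := interior_subset hx
      exact this (hg x hxD)
    have : g⁻¹ • y ∈ (fun x : X => g • x) ⁻¹' interior Dᶜ := by
      simp only [Set.mem_preimage, smul_inv_smul]
      exact hy
    exact interior_maximal hsub hU this
  intro x hx
  have hTx : T x ∈ interior Dᶜ := hTD ▸ Set.mem_image_of_mem T hx
  have h2 : g⁻¹ • T x ∈ T '' D := by rw [hTD]; exact key _ hTx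
  obtain ⟨z, hz, hzeq⟩ := h2
  have : T (T z) = T (g⁻¹ • T x) := by rw [hzeq]
  rw [hTinv, hequiv, hTinv, map_inv] at this
  rw [this] at hz
  exact hz
end
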